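/- arXiv:1909.07266 — 3 statements merged into one kernel-verified Lean document; each statement's English description precedes it below -/
import Mathlib

section
/- Let x₁,…,x_m and y₁,…,y_n be points of a metric space (X,d) with m ≤ n, let C > 0 and p ≥ 1. Extend x by setting x_i = ℵ for m < i ≤ n, using the extended metric d' on X ∪ {ℵ} with d'(x,y) = min{d(x,y), 2^(1/p)C} on X, d'(x,ℵ) = C, d'(ℵ,ℵ) = 0. Then the transport–transform quantity τ(ξ,η)^p, defined as the minimum over all l ∈ {0,…,m} and all choices of pairwise distinct indices i₁,…,i_l ∈ [m] and pairwise distinct j₁,…,j_l ∈ [n] of (m+n−2l)·C^p + Σ_{r=1}^l d(x_{i_r}, y_{j_r})^p, equals min over permutations π of {1,…,n} of Σ_{i=1}^n d'(x_i, y_{π(i)})^p. -/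
open Finset in
lemma aux_image (m n : ℕ) (hmn : m ≤ n) :
    (Finset.univ.image (Fin.castLE hmn)) =
      Finset.univ.filter (fun i : Fin n => (i : ℕ) < m) := by
  ext i
  simp only [Finset.mem_image, Finset.mem_filter, Finset.mem_univ, true_and]
  constructor
  · rintro ⟨j, rfl⟩; exact j.isLt
  · rintro h; exact ⟨⟨i, h⟩, rfl⟩

lemma aux_card (m n : ℕ) (hmn : m ≤ n) :
    (Finset.univ.filter (fun i : Fin n => ¬ (i : ℕ) < m)).card = n - m := by
  have h1 : (Finset.univ.filter (fun i : Fin n => (i : ℕ) < m)).card = m := by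
    rw [← aux_image m n hmn, Finset.card_image_of_injective _ (Fin.castLE_injective hmn)]
    simp
  have h2 := Finset.card_filter_add_card_filter_not
    (s := (Finset.univ : Finset (Fin n))) (p := fun i => (i : ℕ) < m)
  rw [h1, Finset.card_univ, Fintype.card_fin] at h2
  omega

lemma aux_sum_split {n m : ℕ} (hmn : m ≤ n) (f : Fin n → ℝ) :
    ∑ i : Fin n, f i = (∑ i : Fin m, f (Fin.castLE hmn i)) +
      ∑ i ∈ Finset.univ.filter (fun i : Fin n => ¬ (i : ℕ) < m), f i := by
  rw [← Finset.sum_filter_add_sum_filter_not Finset.univ (fun i : Fin n => (i : ℕ) < m) f,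
    ← aux_image m n hmn, Finset.sum_image (by
      intro a _ b _ h; exact Fin.castLE_injective hmn h)]

lemma aux_exists_perm {α β : Type*} [Fintype α] [Fintype β] [DecidableEq β]
    (f g : α → β) (hf : Function.Injective f) (hg : Function.Injective g) :
    ∃ π : Equiv.Perm β, ∀ a, π (f a) = g a := by
  classical
  have hcard : Fintype.card {x // ¬ x ∈ Set.range f} = Fintype.card {x // ¬ x ∈ Set.range g} := by
    rw [Fintype.card_subtype_compl, Fintype.card_subtype_compl]
    congr 1
    rw [Fintype.card_congr (Equiv.ofInjective f hf).symm,
      Fintype.card_congr (Equiv.ofInjective g hg).symm]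
  let e : {x // x ∈ Set.range f} ≃ {x // x ∈ Set.range g} :=
    (Equiv.ofInjective f hf).symm.trans (Equiv.ofInjective g hg)
  let e' : {x // ¬ x ∈ Set.range f} ≃ {x // ¬ x ∈ Set.range g} :=
    Fintype.equivOfCardEq hcard
  refine ⟨e.subtypeCongr e', fun a => ?_⟩
  have h : f a ∈ Set.range f := ⟨a, rfl⟩
  simp only [Equiv.subtypeCongr, Equiv.trans_apply, Equiv.sumCompl_symm_apply_of_pos h,
    Equiv.sumCongr_apply, Sum.map_inl, Equiv.sumCompl_apply_inl]
  show ((e ⟨f a, h⟩ : {x // x ∈ Set.range g}) : β) = g a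
  simp [e, Equiv.ofInjective_symm_apply]

/-- Extended distance on `X ∪ {ℵ}` (modeled as `Option X`). -/
noncomputable def dExt {X : Type*} [MetricSpace X] (C p : ℝ) : Option X → Option X → ℝ
  | some a, some b => min (dist a b) ((2 : ℝ) ^ (1 / p) * C)
  | some _, none => C
  | none, some _ => C
  | none, none => 0

lemma aux_perm_cost {X : Type*} [MetricSpace X] (C p : ℝ) (m n : ℕ) (hmn : m ≤ n)
    (x : Fin m → X) (y : Fin n → X) (π : Equiv.Perm (Fin n)) :
    ∑ i : Fin n,
        dExt C p (if h : (i : ℕ) < m then some (x ⟨i, h⟩) else none) (some (y (π i))) ^ p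
      = (∑ i : Fin m,
          (min (dist (x i) (y (π (Fin.castLE hmn i)))) ((2 : ℝ) ^ (1 / p) * C)) ^ p)
        + (n - m : ℕ) * C ^ p := by
  rw [aux_sum_split hmn]
  congr 1
  · apply Finset.sum_congr rfl
    intro i _
    have h : ((Fin.castLE hmn i : Fin n) : ℕ) < m := i.isLt
    rw [dif_pos h]
    rfl
  · have hterm : ∀ i ∈ Finset.univ.filter (fun i : Fin n => ¬ (i : ℕ) < m),
        dExt C p (if h : (i : ℕ) < m then some (x ⟨i, h⟩) else none) (some (y (π i))) ^ p
          = C ^ p := by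
      intro i hi
      rw [Finset.mem_filter] at hi
      rw [dif_neg hi.2]
      rfl
    rw [Finset.sum_congr rfl hterm, Finset.sum_const, aux_card m n hmn, nsmul_eq_mul]

/-- The TT-distance (to the `p`) as a partial-matching minimum equals the optimal
assignment cost in the extended space, after filling the smaller pattern with `ℵ`. -/
theorem stmt2 {X : Type*} [MetricSpace X] (C p : ℝ) (hC : 0 < C) (hp : 1 ≤ p)
    (m n : ℕ) (hmn : m ≤ n) (x : Fin m → X) (y : Fin n → X) :
    sInf { c : ℝ | ∃ (l : ℕ) (_ : l ≤ min m n) (i : Fin l → Fin m) (j : Fin l → Fin n),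
        Function.Injective i ∧ Function.Injective j ∧
        c = ((m : ℝ) + n - 2 * l) * C ^ p + ∑ r, dist (x (i r)) (y (j r)) ^ p } =
    sInf { c : ℝ | ∃ π : Equiv.Perm (Fin n),
        c = ∑ i : Fin n,
          dExt C p (if h : (i : ℕ) < m then some (x ⟨i, h⟩) else none) (some (y (π i))) ^ p } := by
  classical
  have hp0 : 0 < p := lt_of_lt_of_le one_pos hp
  have hpne : p ≠ 0 := ne_of_gt hp0
  set a : ℝ := (2 : ℝ) ^ (1 / p) * C with ha_def
  have ha : 0 < a := mul_pos (Real.rpow_pos_of_pos two_pos _) hC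
  have hap : a ^ p = 2 * C ^ p := by
    rw [ha_def, Real.mul_rpow (Real.rpow_pos_of_pos two_pos _).le hC.le,
      ← Real.rpow_mul (by norm_num : (0:ℝ) ≤ 2), one_div_mul_cancel hpne, Real.rpow_one]
  set S := { c : ℝ | ∃ (l : ℕ) (_ : l ≤ min m n) (i : Fin l → Fin m) (j : Fin l → Fin n),
        Function.Injective i ∧ Function.Injective j ∧
        c = ((m : ℝ) + n - 2 * l) * C ^ p + ∑ r, dist (x (i r)) (y (j r)) ^ p } with hS_def
  set T := { c : ℝ | ∃ π : Equiv.Perm (Fin n),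
        c = ∑ i : Fin n,
          dExt C p (if h : (i : ℕ) < m then some (x ⟨i, h⟩) else none) (some (y (π i))) ^ p }
    with hT_def
  have hSne : S.Nonempty := by
    refine ⟨((m : ℝ) + n - 2 * 0) * C ^ p + ∑ r : Fin 0, dist (x (Fin.elim0 r)) (y (Fin.elim0 r)) ^ p,
      0, Nat.zero_le _, Fin.elim0, Fin.elim0, fun r => r.elim0, fun r => r.elim0, by push_cast; ring_nf⟩
  have hTne : T.Nonempty := ⟨_, 1, rfl⟩
  have hSbdd : BddBelow S := by
    refine ⟨0, fun c hc => ?_⟩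
    obtain ⟨l, hl, ii, jj, _, _, rfl⟩ := hc
    have h1 : (0:ℝ) ≤ ((m : ℝ) + n - 2 * l) * C ^ p := by
      apply mul_nonneg _ (Real.rpow_pos_of_pos hC p).le
      have h2 : l ≤ m := le_trans hl (min_le_left _ _)
      have h3 : l ≤ n := le_trans hl (min_le_right _ _)
      have : (l:ℝ) ≤ m := Nat.cast_le.2 h2
      have : (l:ℝ) ≤ n := Nat.cast_le.2 h3
      linarith
    have h2 : (0:ℝ) ≤ ∑ r, dist (x (ii r)) (y (jj r)) ^ p :=
      Finset.sum_nonneg fun r _ => Real.rpow_nonneg dist_nonneg p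
    linarith
  have hTbdd : BddBelow T := by
    refine ⟨0, fun c hc => ?_⟩
    obtain ⟨π, rfl⟩ := hc
    refine Finset.sum_nonneg fun i _ => Real.rpow_nonneg ?_ p
    by_cases h : (i : ℕ) < m
    · rw [dif_pos h]; exact le_min dist_nonneg ha.le
    · rw [dif_neg h]; exact hC.le
  apply le_antisymm
  · -- sInf S ≤ sInf T
    refine le_csInf hTne fun b hb => ?_
    obtain ⟨π, rfl⟩ := hb
    set d : Fin m → ℝ := fun i => dist (x i) (y (π (Fin.castLE hmn i))) with hd_def
    set M : Finset (Fin m) := Finset.univ.filter (fun i => d i ≤ a) with hM_def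
    set l := M.card with hl_def
    have hlm : l ≤ m := by
      calc l ≤ Finset.univ.card := Finset.card_le_card (Finset.filter_subset _ _)
      _ = m := by simp
    have hl : l ≤ min m n := le_min hlm (le_trans hlm hmn)
    set e := M.orderIsoOfFin rfl with he_def
    set ii : Fin l → Fin m := fun r => (e r : Fin m) with hii_def
    have hii : Function.Injective ii :=
      Subtype.coe_injective.comp e.toEquiv.injective
    set jj : Fin l → Fin n := fun r => π (Fin.castLE hmn (ii r)) with hjj_def
    have hjj : Function.Injective jj :=
      π.injective.comp ((Fin.castLE_injective hmn).comp hii)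
    have hmem : ((m : ℝ) + n - 2 * l) * C ^ p + ∑ r, dist (x (ii r)) (y (jj r)) ^ p ∈ S :=
      ⟨l, hl, ii, jj, hii, hjj, rfl⟩
    refine le_trans (csInf_le hSbdd hmem) (le_of_eq ?_)
    rw [aux_perm_cost C p m n hmn x y π]
    have hsum1 : ∑ r, dist (x (ii r)) (y (jj r)) ^ p = ∑ i ∈ M, d i ^ p := by
      rw [← Finset.sum_coe_sort M (fun i => d i ^ p), ← Equiv.sum_comp e.toEquiv]
      rfl
    have hsplit : (∑ i : Fin m, (min (d i) a) ^ p)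
        = (∑ i ∈ M, d i ^ p) + (m - l : ℕ) * (a ^ p) := by
      rw [← Finset.sum_filter_add_sum_filter_not Finset.univ (fun i => d i ≤ a)
        (fun i => (min (d i) a) ^ p)]
      congr 1
      · exact Finset.sum_congr rfl fun i hi => by
          rw [min_eq_left (Finset.mem_filter.1 hi).2]
      · have : ∀ i ∈ Finset.univ.filter (fun i : Fin m => ¬ d i ≤ a),
            (min (d i) a) ^ p = a ^ p := fun i hi => by
          rw [min_eq_right (le_of_lt (lt_of_not_ge (Finset.mem_filter.1 hi).2))]
        rw [Finset.sum_congr rfl this, Finset.sum_const, nsmul_eq_mul]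
        congr 2
        have := Finset.card_filter_add_card_filter_not
          (s := (Finset.univ : Finset (Fin m))) (p := fun i : Fin m => d i ≤ a)
        rw [Finset.card_univ, Fintype.card_fin] at this
        have hc : (Finset.filter (fun i : Fin m => d i ≤ a) Finset.univ).card = l := rfl
        omega
    rw [hsplit, hsum1, hap]
    have hnm : ((n - m : ℕ) : ℝ) = (n : ℝ) - m := Nat.cast_sub hmn
    have hml : ((m - l : ℕ) : ℝ) = (m : ℝ) - l := Nat.cast_sub hlm
    rw [hnm, hml]
    ring
  · -- sInf T ≤ sInf S
    refine le_csInf hSne fun b hb => ?_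
    obtain ⟨l, hl, ii, jj, hii, hjj, rfl⟩ := hb
    have hlm : l ≤ m := le_trans hl (min_le_left _ _)
    obtain ⟨π, hπ⟩ := aux_exists_perm (fun r => Fin.castLE hmn (ii r)) jj
      ((Fin.castLE_injective hmn).comp hii) hjj
    set d : Fin m → ℝ := fun i => dist (x i) (y (π (Fin.castLE hmn i))) with hd_def
    have hmem : (∑ i : Fin n,
        dExt C p (if h : (i : ℕ) < m then some (x ⟨i, h⟩) else none) (some (y (π i))) ^ p) ∈ T :=
      ⟨π, rfl⟩
    refine le_trans (csInf_le hTbdd hmem) ?_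
    rw [aux_perm_cost C p m n hmn x y π]
    set R : Finset (Fin m) := Finset.univ.image ii with hR_def
    have hRcard : R.card = l := by
      rw [hR_def, Finset.card_image_of_injective _ hii]; simp
    have hsplit : (∑ i : Fin m, (min (d i) a) ^ p)
        = (∑ i ∈ R, (min (d i) a) ^ p) + ∑ i ∈ Rᶜ, (min (d i) a) ^ p := by
      rw [Finset.sum_add_sum_compl]
    have h1 : ∑ i ∈ R, (min (d i) a) ^ p ≤ ∑ r, dist (x (ii r)) (y (jj r)) ^ p := by
      rw [hR_def, Finset.sum_image (fun r _ s _ h => hii h)]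
      refine Finset.sum_le_sum fun r _ => ?_
      have : d (ii r) = dist (x (ii r)) (y (jj r)) := by
        rw [hd_def]; simp only; rw [hπ r]
      rw [this]
      exact Real.rpow_le_rpow (le_min dist_nonneg ha.le) (min_le_left _ _) hp0.le
    have h2 : ∑ i ∈ Rᶜ, (min (d i) a) ^ p ≤ (m - l : ℕ) * (a ^ p) := by
      have hcard : (Rᶜ : Finset (Fin m)).card = m - l := by
        rw [Finset.card_compl, hRcard, Fintype.card_fin]
      calc ∑ i ∈ Rᶜ, (min (d i) a) ^ p ≤ ∑ _i ∈ Rᶜ, a ^ p :=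
            Finset.sum_le_sum fun i _ =>
              Real.rpow_le_rpow (le_min dist_nonneg ha.le) (min_le_right _ _) hp0.le
        _ = (m - l : ℕ) * (a ^ p) := by rw [Finset.sum_const, hcard, nsmul_eq_mul]
    have hnm : ((n - m : ℕ) : ℝ) = (n : ℝ) - m := Nat.cast_sub hmn
    have hml : ((m - l : ℕ) : ℝ) = (m : ℝ) - l := Nat.cast_sub hlm
    have : (∑ i : Fin m, (min (d i) a) ^ p) + ((n - m : ℕ) : ℝ) * C ^ p
        ≤ (∑ r, dist (x (ii r)) (y (jj r)) ^ p) + ((m - l : ℕ) : ℝ) * (a ^ p)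
          + ((n - m : ℕ) : ℝ) * C ^ p := by
      rw [hsplit]; linarith
    refine le_trans this (le_of_eq ?_)
    rw [hap, hnm, hml]
    ring
end

section
/- Let ξ = Σ_{i=1}^n δ_{xᵢ} and η = Σ_{j=1}^n δ_{yⱼ} be point patterns of equal cardinality n in a metric space (X,d), and let ℵ be an auxiliary point. If both patterns are extended to cardinality N > n by adding N−n points at ℵ each, then min_{π∈S_N} Σ_{i=1}^N d'(xᵢ, y_{π(i)})^p = min_{π∈S_n} Σ_{i=1}^n d'(xᵢ, y_{π(i)})^p, where d' is the extended metric with d'(ℵ,ℵ)=0, d'(x,ℵ)=C, and d'(x,y)=min{d(x,y),2^(1/p)C} for x,y ∈ X. In particular, the TT-distance is unchanged by adding equal numbers of ℵ-points to both patterns. -/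
section Aux

variable {X : Type*} [MetricSpace X] {C p : ℝ}

lemma dExt_pow_triangle (hC : 0 < C) (hp : 1 ≤ p) (a b : Option X) :
    dExt C p a b ^ p ≤ dExt C p a none ^ p + dExt C p none b ^ p := by
  have hp0 : 0 < p := lt_of_lt_of_le one_pos hp
  have h0 : (0 : ℝ) ^ p = 0 := Real.zero_rpow hp0.ne'
  have hCp : 0 ≤ C ^ p := Real.rpow_nonneg hC.le p
  cases a with
  | none =>
    cases b with
    | none => simp [dExt, h0]
    | some b => simp [dExt, h0]
  | some a =>
    cases b with
    | none => simp [dExt, h0]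
    | some b =>
      show min (dist a b) ((2 : ℝ) ^ (1 / p) * C) ^ p ≤ C ^ p + C ^ p
      have h2 : (0:ℝ) ≤ (2 : ℝ) ^ (1 / p) := Real.rpow_nonneg (by norm_num) _
      have hmin : 0 ≤ min (dist a b) ((2 : ℝ) ^ (1 / p) * C) :=
        le_min dist_nonneg (mul_nonneg h2 hC.le)
      calc min (dist a b) ((2 : ℝ) ^ (1 / p) * C) ^ p
          ≤ ((2 : ℝ) ^ (1 / p) * C) ^ p :=
            Real.rpow_le_rpow hmin (min_le_right _ _) hp0.le
        _ = ((2 : ℝ) ^ (1 / p)) ^ p * C ^ p := Real.mul_rpow h2 hC.le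
        _ = (2 : ℝ) ^ ((1 / p) * p) * C ^ p := by
            rw [← Real.rpow_mul (by norm_num : (0:ℝ) ≤ 2)]
        _ = 2 * C ^ p := by rw [one_div_mul_cancel hp0.ne', Real.rpow_one]
        _ = C ^ p + C ^ p := two_mul _

/-- Cost of sending index `a` to index `b` (indices `≥ n` are ℵ points). -/
noncomputable def tcost (C p : ℝ) (n : ℕ) (x y : Fin n → X) (a b : ℕ) : ℝ :=
  dExt C p (if h : a < n then some (x ⟨a, h⟩) else none)
    (if h : b < n then some (y ⟨b, h⟩) else none) ^ p

variable (C p) in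
/-- Total cost of a permutation of `Fin m` (patterns extended by ℵ above `n`). -/
noncomputable def cost (n : ℕ) (x y : Fin n → X) (m : ℕ) (π : Equiv.Perm (Fin m)) : ℝ :=
  ∑ i : Fin m, tcost C p n x y (i : ℕ) ((π i : Fin m) : ℕ)

variable {n : ℕ} {x y : Fin n → X}

lemma tcost_big_zero (hp : 1 ≤ p) {a b : ℕ} (ha : ¬ a < n) (hb : ¬ b < n) :
    tcost C p n x y a b = 0 := by
  have hp0 : p ≠ 0 := (lt_of_lt_of_le one_pos hp).ne'
  rw [tcost, dif_neg ha, dif_neg hb]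
  show (0:ℝ) ^ p = 0
  exact Real.zero_rpow hp0

lemma tcost_tri (hC : 0 < C) (hp : 1 ≤ p) {m : ℕ} (hm : ¬ m < n) (a b : ℕ) :
    tcost C p n x y a b ≤ tcost C p n x y a m + tcost C p n x y m b := by
  have := dExt_pow_triangle (X := X) hC hp
    (if h : a < n then some (x ⟨a, h⟩) else none)
    (if h : b < n then some (y ⟨b, h⟩) else none)
  simpa [tcost, dif_neg hm] using this

/-- Embedding `Fin m` as the first `m` elements of `Fin (m+1)`. -/
def castEquiv (m : ℕ) : Fin m ≃ {i : Fin (m + 1) // (i : ℕ) < m} where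
  toFun i := ⟨i.castSucc, i.isLt⟩
  invFun j := ⟨(j : Fin (m + 1)), j.2⟩
  left_inv i := rfl
  right_inv j := Subtype.ext (Fin.ext rfl)

lemma cost_extendDomain (hp : 1 ≤ p) {m : ℕ} (hm : n ≤ m) (σ : Equiv.Perm (Fin m)) :
    cost C p n x y (m + 1) (σ.extendDomain (castEquiv m)) = cost C p n x y m σ := by
  unfold cost
  rw [Fin.sum_univ_castSucc]
  have hlast : (σ.extendDomain (castEquiv m)) (Fin.last m) = Fin.last m :=
    Equiv.Perm.extendDomain_apply_not_subtype _ _ (by simp)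
  have h0 : tcost C p n x y ((Fin.last m : Fin (m+1)) : ℕ)
      (((σ.extendDomain (castEquiv m)) (Fin.last m) : Fin (m+1)) : ℕ) = 0 := by
    rw [hlast]
    exact tcost_big_zero hp (by simp [Fin.val_last]; omega) (by simp [Fin.val_last]; omega)
  rw [h0, add_zero]
  refine Finset.sum_congr rfl fun i _ => ?_
  have happ : (σ.extendDomain (castEquiv m)) i.castSucc = (σ i).castSucc :=
    Equiv.Perm.extendDomain_apply_image σ (castEquiv m) i
  rw [happ]
  rfl

lemma cost_reduce (hC : 0 < C) (hp : 1 ≤ p) {m : ℕ} (hm : n ≤ m)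
    (π : Equiv.Perm (Fin (m + 1))) :
    ∃ σ : Equiv.Perm (Fin m), cost C p n x y m σ ≤ cost C p n x y (m + 1) π := by
  classical
  set a : Fin (m + 1) := π⁻¹ (Fin.last m) with ha
  set π'' : Equiv.Perm (Fin (m + 1)) := π * Equiv.swap a (Fin.last m) with hπ''
  have hl : π'' (Fin.last m) = Fin.last m := by
    simp [hπ'', ha, Equiv.swap_apply_right]
  have hne_last : ∀ j : Fin (m + 1), ((j : ℕ) < m) ↔ j ≠ Fin.last m := by
    intro j
    have := j.isLt
    constructor
    · intro hj hc
      rw [hc, Fin.val_last] at hj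
      omega
    · intro hj
      rcases Nat.lt_succ_iff_lt_or_eq.mp this with h | h
      · exact h
      · exact absurd (Fin.ext h) hj
  have hmem : ∀ i : Fin (m + 1), ((i : ℕ) < m) ↔ ((π'' i : Fin (m+1)) : ℕ) < m := by
    intro i
    rw [hne_last, hne_last]
    constructor
    · exact fun h hc => h (π''.injective (hc.trans hl.symm))
    · exact fun h hc => h (by rw [hc, hl])
  set σ : Equiv.Perm (Fin m) :=
    (Equiv.permCongr (castEquiv m)).symm (π''.subtypePerm fun i => (hmem i).symm) with hσdef
  have hσ : ∀ i : Fin m, ((σ i : Fin m) : ℕ) = ((π'' i.castSucc : Fin (m+1)) : ℕ) :=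
    fun i => rfl
  refine ⟨σ, ?_⟩
  have hcost'' : cost C p n x y m σ = cost C p n x y (m + 1) π'' := by
    unfold cost
    rw [Fin.sum_univ_castSucc]
    have h0 : tcost C p n x y ((Fin.last m : Fin (m+1)) : ℕ)
        ((π'' (Fin.last m) : Fin (m+1)) : ℕ) = 0 := by
      rw [hl]
      exact tcost_big_zero hp (by simp [Fin.val_last]; omega) (by simp [Fin.val_last]; omega)
    rw [h0, add_zero]
    refine Finset.sum_congr rfl fun i _ => ?_
    rw [hσ i]
    rfl
  rw [hcost'']
  -- now show cost π'' ≤ cost π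
  rcases eq_or_ne a (Fin.last m) with h | h
  · have : π'' = π := by
      rw [hπ'', h, Equiv.swap_self]
      ext i
      rfl
    rw [this]
  · unfold cost
    have hmem1 : Fin.last m ∈ (Finset.univ.erase a) :=
      Finset.mem_erase.2 ⟨fun hc => h (hc.symm), Finset.mem_univ _⟩
    have key : ∀ ρ : Equiv.Perm (Fin (m + 1)),
        ∑ i : Fin (m + 1), tcost C p n x y (i : ℕ) ((ρ i : Fin (m+1)) : ℕ) =
        (∑ i ∈ (Finset.univ.erase a).erase (Fin.last m),
          tcost C p n x y (i : ℕ) ((ρ i : Fin (m+1)) : ℕ))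
          + tcost C p n x y ((Fin.last m : Fin (m+1)) : ℕ) ((ρ (Fin.last m) : Fin (m+1)) : ℕ)
          + tcost C p n x y ((a : Fin (m+1)) : ℕ) ((ρ a : Fin (m+1)) : ℕ) := by
      intro ρ
      rw [Finset.sum_erase_add _ _ hmem1, Finset.sum_erase_add _ _ (Finset.mem_univ a)]
    rw [key π'', key π]
    have hsame : ∀ i ∈ (Finset.univ.erase a).erase (Fin.last m),
        tcost C p n x y (i : ℕ) ((π'' i : Fin (m+1)) : ℕ) =
        tcost C p n x y (i : ℕ) ((π i : Fin (m+1)) : ℕ) := by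
      intro i hi
      rcases Finset.mem_erase.1 hi with ⟨hil, hi'⟩
      rcases Finset.mem_erase.1 hi' with ⟨hia, _⟩
      rw [hπ'']
      simp [Equiv.swap_apply_of_ne_of_ne hia hil]
    rw [Finset.sum_congr rfl hsame]
    have hπa : π a = Fin.last m := by rw [ha]; exact π.apply_symm_apply _
    have hπ''a : π'' a = π (Fin.last m) := by
      rw [hπ'']
      simp [Equiv.swap_apply_left]
    have hmn : ¬ ((Fin.last m : Fin (m+1)) : ℕ) < n := by
      simp [Fin.val_last]; omega
    have h1 : tcost C p n x y ((Fin.last m : Fin (m+1)) : ℕ)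
        ((π'' (Fin.last m) : Fin (m+1)) : ℕ) = 0 := by
      rw [hl]; exact tcost_big_zero hp hmn hmn
    rw [h1, add_zero, hπ''a, hπa]
    have htri : tcost C p n x y ((a : Fin (m+1)) : ℕ) ((π (Fin.last m) : Fin (m+1)) : ℕ) ≤
        tcost C p n x y ((a : Fin (m+1)) : ℕ) ((Fin.last m : Fin (m+1)) : ℕ)
          + tcost C p n x y ((Fin.last m : Fin (m+1)) : ℕ) ((π (Fin.last m) : Fin (m+1)) : ℕ) := by
      exact tcost_tri hC hp hmn _ _
    linarith [htri]

end Aux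

/-- The optimal assignment cost between two patterns of equal cardinality `n` is unchanged
when both patterns are extended to cardinality `N > n` by adding points at `ℵ`. -/
theorem stmt7 {X : Type*} [MetricSpace X] (C p : ℝ) (hC : 0 < C) (hp : 1 ≤ p)
    (n N : ℕ) (hnN : n < N) (x y : Fin n → X) :
    sInf { c : ℝ | ∃ π : Equiv.Perm (Fin N),
        c = ∑ i : Fin N,
          dExt C p (if h : (i : ℕ) < n then some (x ⟨i, h⟩) else none)
            (if h : ((π i : Fin N) : ℕ) < n then some (y ⟨π i, h⟩) else none) ^ p } =
    sInf { c : ℝ | ∃ π : Equiv.Perm (Fin n),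
        c = ∑ i : Fin n, dExt C p (some (x i)) (some (y (π i))) ^ p } := by
  have hset : ∀ m : ℕ,
      { c : ℝ | ∃ π : Equiv.Perm (Fin m), c = cost C p n x y m π } =
      Set.range (cost C p n x y m) := by
    intro m
    ext c
    exact ⟨fun ⟨π, h⟩ => ⟨π, h.symm⟩, fun ⟨π, h⟩ => ⟨π, h.symm⟩⟩
  have step : ∀ m : ℕ, n ≤ m →
      sInf (Set.range (cost C p n x y (m + 1))) = sInf (Set.range (cost C p n x y m)) := by
    intro m hm
    apply le_antisymm
    · refine le_csInf (Set.range_nonempty _) ?_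
      rintro c ⟨σ, rfl⟩
      exact csInf_le ((Set.finite_range _).bddBelow)
        ⟨σ.extendDomain (castEquiv m), cost_extendDomain hp hm σ⟩
    · refine le_csInf (Set.range_nonempty _) ?_
      rintro c ⟨π, rfl⟩
      obtain ⟨σ, hσ⟩ := cost_reduce (x := x) (y := y) hC hp hm π
      exact le_trans (csInf_le ((Set.finite_range _).bddBelow) ⟨σ, rfl⟩) hσ
  have main : ∀ m : ℕ, n ≤ m →
      sInf (Set.range (cost C p n x y m)) = sInf (Set.range (cost C p n x y n)) := by
    intro m hm
    induction m, hm using Nat.le_induction with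
    | base => rfl
    | succ m hm ih => rw [step m hm, ih]
  have hcostn : ∀ σ : Equiv.Perm (Fin n),
      cost C p n x y n σ = ∑ i : Fin n, dExt C p (some (x i)) (some (y (σ i))) ^ p := by
    intro σ
    refine Finset.sum_congr rfl fun i _ => ?_
    rw [tcost, dif_pos i.isLt, dif_pos (σ i).isLt]
  have hRHS : { c : ℝ | ∃ π : Equiv.Perm (Fin n),
      c = ∑ i : Fin n, dExt C p (some (x i)) (some (y (π i))) ^ p } =
      Set.range (cost C p n x y n) := by
    ext c
    constructor
    · rintro ⟨σ, rfl⟩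
      exact ⟨σ, hcostn σ⟩
    · rintro ⟨σ, rfl⟩
      exact ⟨σ, hcostn σ⟩
  show sInf { c : ℝ | ∃ π : Equiv.Perm (Fin N), c = cost C p n x y N π } = _
  rw [hset N, hRHS]
  exact main N hnN.le
end

section
/- Let ξⱼ = Σ_{i=1}^{n} δ_{x_{ij}} (j = 1,…,k) be point patterns of common cardinality n in the extended metric space (X', d') (where points may equal ℵ). Then min over finite point patterns ζ of Σ_{j=1}^k τ(ξⱼ|_X, ζ)^p, restricted to candidates ζ = Σ_{i=1}^n δ_{zᵢ} with zᵢ ∈ X', equals min over permutations π₁,…,π_k ∈ S_n of Σ_{i=1}^n min_{z ∈ X'} Σ_{j=1}^k d'(x_{πⱼ(i),j}, z)^p. In other words, the multi-pattern Fréchet minimization interchanges: min over centers and matchings of the doubly-indexed sum equals the nested minimization where each cluster {x_{πⱼ(i),j} : j} is assigned an optimal center independently. -/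
lemma dExt_nonneg {X : Type*} [MetricSpace X] {C p : ℝ} (hC : 0 < C) :
    ∀ a b : Option X, 0 ≤ dExt C p a b := by
  intro a b
  rcases a with _ | a <;> rcases b with _ | b <;> simp [dExt, hC.le]
  positivity

/-- Sum of infima equals infimum over tuples, for nonnegative functions. -/
lemma sum_csInf_eq {m : ℕ} {α : Fin m → Type*} [∀ i, Nonempty (α i)]
    (f : ∀ i, α i → ℝ) (hf : ∀ i a, 0 ≤ f i a) :
    ∑ i, sInf (Set.range (f i)) =
      sInf (Set.range fun a : ∀ i, α i => ∑ i, f i (a i)) := by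
  have hbdd : ∀ i, BddBelow (Set.range (f i)) := fun i =>
    ⟨0, by rintro _ ⟨a, rfl⟩; exact hf i a⟩
  apply le_antisymm
  · apply le_csInf (Set.range_nonempty _)
    rintro _ ⟨a, rfl⟩
    exact Finset.sum_le_sum fun i _ => csInf_le (hbdd i) ⟨a i, rfl⟩
  · rcases Nat.eq_zero_or_pos m with hm | hm
    · subst hm
      simp
    · apply le_of_forall_pos_le_add
      intro ε hε
      have hmpos : (0 : ℝ) < m := by exact_mod_cast hm
      have hε' : 0 < ε / m := div_pos hε hmpos
      have key : ∀ i, ∃ c : α i, f i c < sInf (Set.range (f i)) + ε / m := by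
        intro i
        obtain ⟨v, ⟨c, rfl⟩, hv⟩ := Real.lt_sInf_add_pos (Set.range_nonempty (f i))
          (ε := ε / m) hε'
        exact ⟨c, hv⟩
      choose c hc using key
      calc sInf (Set.range fun a : ∀ i, α i => ∑ i, f i (a i))
          ≤ ∑ i, f i (c i) := csInf_le ⟨0, by
            rintro _ ⟨a, rfl⟩
            exact Finset.sum_nonneg fun i _ => hf i (a i)⟩ ⟨c, rfl⟩
        _ ≤ ∑ i, (sInf (Set.range (f i)) + ε / m) :=
            Finset.sum_le_sum fun i _ => (hc i).le
        _ = (∑ i, sInf (Set.range (f i))) + ε := by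
            rw [Finset.sum_add_distrib]
            congr 1
            simp [Finset.sum_const]
            field_simp
  
/-- Collapsing a nested infimum, for nonnegative functions. -/
lemma csInf_csInf_eq {α β : Type*} [Nonempty β] (G : α → β → ℝ)
    (hG : ∀ a b, 0 ≤ G a b) :
    sInf {c | ∃ a, c = sInf (Set.range (G a))} = sInf {c | ∃ a b, c = G a b} := by
  by_cases hα : Nonempty α
  · have hbddR : BddBelow {c : ℝ | ∃ a b, c = G a b} :=
      ⟨0, by rintro _ ⟨a, b, rfl⟩; exact hG a b⟩
    have hbddr : ∀ a, BddBelow (Set.range (G a)) := fun a =>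
      ⟨0, by rintro _ ⟨b, rfl⟩; exact hG a b⟩
    have hbddL : BddBelow {c : ℝ | ∃ a, c = sInf (Set.range (G a))} := by
      refine ⟨0, ?_⟩
      rintro _ ⟨a, rfl⟩
      exact le_csInf (Set.range_nonempty _) (by rintro _ ⟨b, rfl⟩; exact hG a b)
    apply le_antisymm
    · refine le_csInf ⟨G (Classical.arbitrary α) (Classical.arbitrary β),
        Classical.arbitrary α, Classical.arbitrary β, rfl⟩ ?_
      rintro _ ⟨a, b, rfl⟩
      calc sInf {c : ℝ | ∃ a, c = sInf (Set.range (G a))}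
          ≤ sInf (Set.range (G a)) := csInf_le hbddL ⟨a, rfl⟩
        _ ≤ G a b := csInf_le (hbddr a) ⟨b, rfl⟩
    · refine le_csInf ⟨sInf (Set.range (G (Classical.arbitrary α))),
        Classical.arbitrary α, rfl⟩ ?_
      rintro _ ⟨a, rfl⟩
      apply le_csInf (Set.range_nonempty _)
      rintro _ ⟨b, rfl⟩
      exact csInf_le hbddR ⟨a, b, rfl⟩
  · have h1 : {c : ℝ | ∃ a, c = sInf (Set.range (G a))} = ∅ := by
      ext c; simp only [Set.mem_setOf_eq, Set.mem_empty_iff_false, iff_false]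
      rintro ⟨a, -⟩; exact hα ⟨a⟩
    have h2 : {c : ℝ | ∃ a b, c = G a b} = ∅ := by
      ext c; simp only [Set.mem_setOf_eq, Set.mem_empty_iff_false, iff_false]
      rintro ⟨a, -⟩; exact hα ⟨a⟩
    rw [h1, h2]

/-- Interchange of minimization for the multi-pattern Fréchet functional: minimizing over
centers `z₁,…,z_n ∈ X'` the sum over `j` of the optimal assignment costs to `ξⱼ` equals
minimizing over matchings `π₁,…,π_k` the sum over clusters of the optimal cluster-center
cost. Here `x j i` is the `i`-th point of the `j`-th pattern (possibly `ℵ = none`). -/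
theorem stmt12 {X : Type*} [MetricSpace X] (C p : ℝ) (hC : 0 < C) (hp : 1 ≤ p)
    (k n : ℕ) (x : Fin k → Fin n → Option X) :
    sInf { c : ℝ | ∃ z : Fin n → Option X,
      c = ∑ j : Fin k, sInf { s : ℝ | ∃ π : Equiv.Perm (Fin n),
            s = ∑ i : Fin n, dExt C p (x j (π i)) (z i) ^ p } } =
    sInf { c : ℝ | ∃ π : Fin k → Equiv.Perm (Fin n),
      c = ∑ i : Fin n, sInf { s : ℝ | ∃ z : Option X,
            s = ∑ j : Fin k, dExt C p (x j ((π j) i)) z ^ p } } := by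
  have hnn : ∀ (a b : Option X), 0 ≤ dExt C p a b ^ p := fun a b =>
    Real.rpow_nonneg (dExt_nonneg hC a b) p
  -- Rewrite inner set-builders as ranges
  have hsetL : ∀ (z : Fin n → Option X) (j : Fin k),
      {s : ℝ | ∃ π : Equiv.Perm (Fin n), s = ∑ i : Fin n, dExt C p (x j (π i)) (z i) ^ p}
        = Set.range (fun π : Equiv.Perm (Fin n) =>
            ∑ i : Fin n, dExt C p (x j (π i)) (z i) ^ p) := by
    intro z j; ext s; simp [eq_comm]
  have hsetR : ∀ (π : Fin k → Equiv.Perm (Fin n)) (i : Fin n),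
      {s : ℝ | ∃ z : Option X, s = ∑ j : Fin k, dExt C p (x j ((π j) i)) z ^ p}
        = Set.range (fun z : Option X =>
            ∑ j : Fin k, dExt C p (x j ((π j) i)) z ^ p) := by
    intro π i; ext s; simp [eq_comm]
  -- Left side: for each z, sum over j of inf over permutations = inf over tuples of perms
  have hL : ∀ z : Fin n → Option X,
      (∑ j : Fin k, sInf {s : ℝ | ∃ π : Equiv.Perm (Fin n),
          s = ∑ i : Fin n, dExt C p (x j (π i)) (z i) ^ p})
        = sInf (Set.range fun π : Fin k → Equiv.Perm (Fin n) =>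
            ∑ j : Fin k, ∑ i : Fin n, dExt C p (x j ((π j) i)) (z i) ^ p) := by
    intro z
    have := sum_csInf_eq (m := k) (α := fun _ => Equiv.Perm (Fin n))
      (f := fun j π => ∑ i : Fin n, dExt C p (x j (π i)) (z i) ^ p)
      (fun j π => Finset.sum_nonneg fun i _ => hnn _ _)
    simp only [hsetL]
    exact this
  -- Right side: for each π, sum over i of inf over centers = inf over tuples of centers
  have hR : ∀ π : Fin k → Equiv.Perm (Fin n),
      (∑ i : Fin n, sInf {s : ℝ | ∃ z : Option X,
          s = ∑ j : Fin k, dExt C p (x j ((π j) i)) z ^ p})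
        = sInf (Set.range fun z : Fin n → Option X =>
            ∑ i : Fin n, ∑ j : Fin k, dExt C p (x j ((π j) i)) (z i) ^ p) := by
    intro π
    have := sum_csInf_eq (m := n) (α := fun _ => Option X)
      (f := fun i z => ∑ j : Fin k, dExt C p (x j ((π j) i)) z ^ p)
      (fun i z => Finset.sum_nonneg fun j _ => hnn _ _)
    simp only [hsetR]
    exact this
  calc sInf { c : ℝ | ∃ z : Fin n → Option X,
        c = ∑ j : Fin k, sInf { s : ℝ | ∃ π : Equiv.Perm (Fin n),
              s = ∑ i : Fin n, dExt C p (x j (π i)) (z i) ^ p } }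
      = sInf { c : ℝ | ∃ z : Fin n → Option X,
          c = sInf (Set.range fun π : Fin k → Equiv.Perm (Fin n) =>
              ∑ j : Fin k, ∑ i : Fin n, dExt C p (x j ((π j) i)) (z i) ^ p) } := by
        congr 1; ext c; simp only [Set.mem_setOf_eq, hL]
    _ = sInf { c : ℝ | ∃ (z : Fin n → Option X) (π : Fin k → Equiv.Perm (Fin n)),
          c = ∑ j : Fin k, ∑ i : Fin n, dExt C p (x j ((π j) i)) (z i) ^ p } :=
        csInf_csInf_eq _ (fun z π => Finset.sum_nonneg fun j _ =>
          Finset.sum_nonneg fun i _ => hnn _ _)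
    _ = sInf { c : ℝ | ∃ (π : Fin k → Equiv.Perm (Fin n)) (z : Fin n → Option X),
          c = ∑ i : Fin n, ∑ j : Fin k, dExt C p (x j ((π j) i)) (z i) ^ p } := by
        congr 1; ext c
        constructor
        · rintro ⟨z, π, rfl⟩
          exact ⟨π, z, by rw [Finset.sum_comm]⟩
        · rintro ⟨π, z, rfl⟩
          exact ⟨z, π, by rw [Finset.sum_comm]⟩
    _ = sInf { c : ℝ | ∃ π : Fin k → Equiv.Perm (Fin n),
          c = sInf (Set.range fun z : Fin n → Option X =>
              ∑ i : Fin n, ∑ j : Fin k, dExt C p (x j ((π j) i)) (z i) ^ p) } :=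
        (csInf_csInf_eq _ (fun π z => Finset.sum_nonneg fun i _ =>
          Finset.sum_nonneg fun j _ => hnn _ _)).symm
    _ = sInf { c : ℝ | ∃ π : Fin k → Equiv.Perm (Fin n),
          c = ∑ i : Fin n, sInf { s : ℝ | ∃ z : Option X,
              s = ∑ j : Fin k, dExt C p (x j ((π j) i)) z ^ p } } := by
        congr 1; ext c; simp only [Set.mem_setOf_eq, hR]
end
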